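/- Let p ≥ 2 and let G_1, G_2, ... be i.i.d. geometric random variables on ℕ = {1,2,...} with P(G_1 = N) = (p-1)p^{-N} (so E[G_1] = μ = p/(p-1)). Then for every t ≥ 1 and n ∈ ℕ, P(G_1 + ... + G_n ≥ t·n·μ) ≤ exp(−n(t − 1 − log t)). -/

import Mathlib

open MeasureTheory ProbabilityTheory
open scoped ENNReal NNReal

/-- Janson's tail bound: for i.i.d. geometric variables `G_i` on `{1,2,...}` with
`P(G = N) = (p-1) p^{-N}` (mean `μ = p/(p-1)`), one has
`P(G_1 + ... + G_n ≥ t n μ) ≤ exp(-n(t - 1 - log t))` for `t ≥ 1`. -/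
theorem stmt5 (p : ℕ) (hp : 2 ≤ p)
    {Ω : Type*} [MeasurableSpace Ω] (μ : Measure Ω) [IsProbabilityMeasure μ]
    (G : ℕ → Ω → ℕ) (hmeas : ∀ i, Measurable (G i))
    (hindep : iIndepFun G μ)
    (hdist : ∀ i N, 1 ≤ N → μ (G i ⁻¹' {N}) = ENNReal.ofReal (((p : ℝ) - 1) / (p : ℝ) ^ N))
    (hdist0 : ∀ i, μ (G i ⁻¹' {0}) = 0)
    (n : ℕ) (t : ℝ) (ht : 1 ≤ t) :
    μ {ω | t * n * ((p : ℝ) / ((p : ℝ) - 1)) ≤ ∑ i ∈ Finset.range n, (G i ω : ℝ)}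
      ≤ ENNReal.ofReal (Real.exp (-(n * (t - 1 - Real.log t)))) := by
  set P : ℝ := (p : ℝ) with hPdef
  have hP2 : (2:ℝ) ≤ P := by rw [hPdef]; exact_mod_cast hp
  have hP1 : (1:ℝ) < P := by linarith
  have hP0 : P ≠ 0 := by linarith
  have ht0 : (0:ℝ) < t := by linarith
  have hd : (0:ℝ) < t + P - 1 := by linarith
  have hd0 : t + P - 1 ≠ 0 := ne_of_gt hd
  set a : ℝ := P * t / (t + P - 1) with hadef
  have ha1 : 1 ≤ a := by
    rw [le_div_iff₀ hd]; nlinarith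
  have ha0 : (0:ℝ) < a := by linarith
  have haP : a < P := by
    rw [div_lt_iff₀ hd]; nlinarith
  -- the tilted functions
  set F : ℕ → Ω → ℝ≥0∞ := fun i ω => ENNReal.ofReal (a ^ G i ω) with hFdef
  have hg : Measurable (fun N : ℕ => ENNReal.ofReal (a ^ N)) := measurable_from_nat
  have hFmeas : ∀ i, Measurable (F i) := fun i => hg.comp (hmeas i)
  -- mgf of each G i equals t
  have hmgf : ∀ i, ∫⁻ ω, F i ω ∂μ = ENNReal.ofReal t := by
    intro i
    have hmap : ∫⁻ ω, F i ω ∂μ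
        = ∫⁻ N, ENNReal.ofReal (a ^ N) ∂(μ.map (G i)) := by
      rw [lintegral_map hg (hmeas i)]
    rw [hmap, lintegral_countable']
    have hmass : ∀ N, (μ.map (G i)) {N} = μ (G i ⁻¹' {N}) := fun N =>
      Measure.map_apply (hmeas i) (measurableSet_singleton N)
    simp_rw [hmass]
    rw [tsum_eq_zero_add' ENNReal.summable]
    rw [hdist0 i, mul_zero, zero_add]
    have hterm : ∀ N : ℕ, ENNReal.ofReal (a ^ (N+1)) * μ (G i ⁻¹' {N+1})
        = ENNReal.ofReal (((P - 1) * (a / P)) * (a / P) ^ N) := by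
      intro N
      rw [hdist i (N+1) (Nat.le_add_left 1 N), ← ENNReal.ofReal_mul (by positivity)]
      congr 1
      field_simp
      have hPN : P ^ N * P⁻¹ ^ N = 1 := by rw [← mul_pow, mul_inv_cancel₀ hP0, one_pow]
      linear_combination (a * a ^ N * P - a * a ^ N * P ^ 2) * hPN
    simp_rw [hterm]
    have hr0 : (0:ℝ) ≤ a / P := by positivity
    have hr1 : a / P < 1 := (div_lt_one (by linarith)).mpr haP
    have hsum : Summable (fun N : ℕ => ((P - 1) * (a / P)) * (a / P) ^ N) :=
      (summable_geometric_of_lt_one hr0 hr1).mul_left _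
    rw [← ENNReal.ofReal_tsum_of_nonneg
      (fun N => mul_nonneg (mul_nonneg (by linarith) hr0) (pow_nonneg hr0 N)) hsum]
    congr 1
    rw [tsum_mul_left, tsum_geometric_of_lt_one hr0 hr1, ← div_eq_mul_inv]
    have h1pos : (0:ℝ) < 1 - a / P := by
      have := (div_lt_one (by linarith : (0:ℝ) < P)).mpr haP
      linarith
    rw [div_eq_iff (ne_of_gt h1pos), hadef]
    field_simp
    ring
  -- product formula via independence
  have hFindep : iIndepFun F μ :=
    hindep.comp (fun _ => fun N : ℕ => ENNReal.ofReal (a ^ N)) (fun _ => hg)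
  have hprod : ∀ m, ∫⁻ ω, ∏ i ∈ Finset.range m, F i ω ∂μ = ENNReal.ofReal t ^ m := by
    intro m
    induction m with
    | zero => simp
    | succ m ih =>
      have hindep2 : IndepFun (fun ω => ∏ j ∈ Finset.range m, F j ω) (F m) μ := by
        have h := hFindep.indepFun_prod_range_succ hFmeas m
        have hpt : (∏ j ∈ Finset.range m, F j) = fun ω => ∏ j ∈ Finset.range m, F j ω := by
          funext ω; simp
        rwa [hpt] at h
      simp_rw [Finset.prod_range_succ]
      rw [lintegral_mul_eq_lintegral_mul_lintegral_of_indepFun''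
        (Finset.measurable_prod _ (fun i _ => hFmeas i)).aemeasurable
        (hFmeas m).aemeasurable hindep2, ih, hmgf, pow_succ]
  -- Chernoff
  set c : ℝ := t * n * (P / (P - 1)) with hcdef
  have hP10 : P - 1 ≠ 0 := by linarith
  have htne : t ≠ 0 := ne_of_gt ht0
  have hc0 : 0 ≤ c := mul_nonneg (mul_nonneg (by linarith) (Nat.cast_nonneg n))
    (div_nonneg (by linarith) (by linarith))
  set ε : ℝ≥0∞ := ENNReal.ofReal (a ^ c) with hedef
  have hac0 : (0:ℝ) < a ^ c := Real.rpow_pos_of_pos ha0 c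
  have hε0 : ε ≠ 0 := by simp [hedef, ENNReal.ofReal_pos.mpr hac0, ne_of_gt]
  have hεtop : ε ≠ ⊤ := ENNReal.ofReal_ne_top
  have hsubset : {ω | c ≤ ∑ i ∈ Finset.range n, (G i ω : ℝ)}
      ⊆ {ω | ε ≤ ∏ i ∈ Finset.range n, F i ω} := by
    intro ω hω
    have hS : ∏ i ∈ Finset.range n, F i ω
        = ENNReal.ofReal (a ^ (∑ i ∈ Finset.range n, G i ω)) := by
      rw [← ENNReal.ofReal_prod_of_nonneg (fun i _ => by positivity), ← Finset.prod_pow_eq_pow_sum]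
    rw [Set.mem_setOf_eq, hS]
    apply ENNReal.ofReal_le_ofReal
    have : a ^ c ≤ a ^ ((∑ i ∈ Finset.range n, G i ω : ℕ) : ℝ) := by
      apply Real.rpow_le_rpow_of_exponent_le ha1
      push_cast
      exact hω
    rwa [Real.rpow_natCast] at this
  have hcher : μ {ω | c ≤ ∑ i ∈ Finset.range n, (G i ω : ℝ)} ≤ ε⁻¹ * ENNReal.ofReal t ^ n := by
    have h1 : ε * μ {ω | ε ≤ ∏ i ∈ Finset.range n, F i ω} ≤ ENNReal.ofReal t ^ n := by
      rw [← hprod n]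
      exact mul_meas_ge_le_lintegral₀
        ((Finset.measurable_prod _ (fun i _ => hFmeas i)).aemeasurable) ε
    calc μ {ω | c ≤ ∑ i ∈ Finset.range n, (G i ω : ℝ)}
        ≤ μ {ω | ε ≤ ∏ i ∈ Finset.range n, F i ω} := measure_mono hsubset
      _ = ε⁻¹ * (ε * μ {ω | ε ≤ ∏ i ∈ Finset.range n, F i ω}) := by
          rw [← mul_assoc, ENNReal.inv_mul_cancel hε0 hεtop, one_mul]
      _ ≤ ε⁻¹ * ENNReal.ofReal t ^ n := mul_le_mul_right h1 _
  refine hcher.trans ?_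
  -- final real inequality
  rw [hedef, ← ENNReal.ofReal_inv_of_pos hac0, ← ENNReal.ofReal_pow ht0.le,
    ← ENNReal.ofReal_mul (by positivity)]
  apply ENNReal.ofReal_le_ofReal
  have hloga : (P - 1) * (t - 1) / (P * t) ≤ Real.log a := by
    have h1 : Real.log a⁻¹ ≤ a⁻¹ - 1 := Real.log_le_sub_one_of_pos (by positivity)
    rw [Real.log_inv] at h1
    have hainv : a⁻¹ = (t + P - 1) / (P * t) := by
      rw [hadef, inv_div]
    have h2 : (P - 1) * (t - 1) / (P * t) = 1 - (t + P - 1) / (P * t) := by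
      field_simp
      ring
    rw [h2, ← hainv]; linarith
  have hkey : n * (t - 1) ≤ c * Real.log a := by
    have h2 : c * ((P - 1) * (t - 1) / (P * t)) ≤ c * Real.log a :=
      mul_le_mul_of_nonneg_left hloga hc0
    have h3 : c * ((P - 1) * (t - 1) / (P * t)) = n * (t - 1) := by
      rw [hcdef]; field_simp
    linarith
  have hexp : (a ^ c)⁻¹ * t ^ n = Real.exp (-(c * Real.log a) + n * Real.log t) := by
    rw [Real.rpow_def_of_pos ha0, ← Real.exp_neg, Real.exp_add]
    congr 1
    · ring_nf
    · rw [← Real.exp_log ht0, ← Real.exp_nat_mul, Real.log_exp]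
  rw [hexp]
  apply Real.exp_le_exp.mpr
  nlinarith [hkey]
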